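/- Let 𝒜 be a finite nonempty set of positive integers, y > 1 a real, x := max 𝒜, and define T(y,n) := ∑_{p ≤ y prime, n·p ≤ x} Ψ_𝒜(y, p·n)·log p and R(y,n) := ∑_{p ≤ y prime, x/y < n·p ≤ x} A_{p·n}·log p for each positive integer n. Then for every integer k ≥ 1, T(y,1) ≥ R(y,1) + ∑_{i=1}^{k} ∑_{p_1,…,p_i primes ≤ y with p_1⋯p_i ≤ x/y} Q(x; p_1,…,p_i)·R(y, p_1⋯p_i), where for primes p_1,…,p_i with p_1⋯p_i < x, Q(x; p_1,…,p_i) := (∏_{j=1}^i log p_j)/(∏_{j=1}^i log(x/(p_1⋯p_j))). -/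
import Mathlib


attribute [local instance] Classical.propDecidable

/-- Largest prime factor, with the convention `Pplus 1 = 1`. -/
def Pplus (n : ℕ) : ℕ := max 1 (n.primeFactors.sup id)

/-- `A_d`, the number of multiples of `d` in `𝒜`. -/
def Ad (𝒜 : Finset ℕ) (d : ℕ) : ℕ := (𝒜.filter (fun n => d ∣ n)).card

/-- `Ψ_𝒜(y,d)`, the number of `y`-friable multiples of `d` in `𝒜`. -/
noncomputable def PsiAd (𝒜 : Finset ℕ) (y : ℝ) (d : ℕ) : ℕ :=
  (𝒜.filter (fun n => (Pplus n : ℝ) ≤ y ∧ d ∣ n)).card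

/-- `T(y,n) = ∑_{p ≤ y, np ≤ x} Ψ_𝒜(y, pn) log p`. -/
noncomputable def Tsum (𝒜 : Finset ℕ) (x : ℕ) (y : ℝ) (n : ℕ) : ℝ :=
  ∑ p ∈ (Finset.range (x + 1)).filter
      (fun (p : ℕ) => p.Prime ∧ (p : ℝ) ≤ y ∧ n * p ≤ x),
    (PsiAd 𝒜 y (p * n) : ℝ) * Real.log p

/-- `R(y,n) = ∑_{p ≤ y, x/y < np ≤ x} A_{pn} log p`. -/
noncomputable def Rsum (𝒜 : Finset ℕ) (x : ℕ) (y : ℝ) (n : ℕ) : ℝ :=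
  ∑ p ∈ (Finset.range (x + 1)).filter
      (fun (p : ℕ) => p.Prime ∧ (p : ℝ) ≤ y ∧ (x : ℝ) / y < ((n * p : ℕ) : ℝ) ∧ n * p ≤ x),
    (Ad 𝒜 (p * n) : ℝ) * Real.log p

/-- `Q(x; p_1, …, p_i) = ∏ log p_j / ∏ log (x/(p_1⋯p_j))`. -/
noncomputable def Qfac (x : ℝ) (i : ℕ) (p : Fin i → ℕ) : ℝ :=
  (∏ j, Real.log (p j)) /
    ∏ j : Fin i, Real.log (x / ∏ l ∈ Finset.univ.filter (fun l : Fin i => l ≤ j), (p l : ℝ))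


open Finset

/-- primes `p ≤ y` with `np ≤ x/y`. -/
noncomputable def Pfin (x : ℕ) (y : ℝ) (n : ℕ) : Finset ℕ :=
  (Finset.range (x + 1)).filter
    (fun p => p.Prime ∧ (p : ℝ) ≤ y ∧ ((n * p : ℕ) : ℝ) ≤ (x : ℝ) / y)

noncomputable def Sset (x : ℕ) (y : ℝ) (i : ℕ) : Finset (Fin i → ℕ) :=
  (Fintype.piFinset fun _ => Finset.range (x + 1)).filter
    (fun q => (∀ j, (q j).Prime ∧ ((q j : ℝ) ≤ y)) ∧ ((∏ j, q j : ℕ) : ℝ) ≤ (x : ℝ) / y)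

lemma Pplusle {m : ℕ} {y : ℝ} (hy1 : 1 ≤ y) (h : ∀ r ∈ m.primeFactors, (r : ℝ) ≤ y) :
    (Pplus m : ℝ) ≤ y := by
  rcases Finset.eq_empty_or_nonempty m.primeFactors with he | hne
  · simp [Pplus, he, hy1]
  · obtain ⟨r, hr, hsup⟩ := Finset.exists_mem_eq_sup m.primeFactors hne id
    have : Pplus m = max 1 r := by rw [Pplus, hsup]; rfl
    rw [this]
    push_cast
    exact max_le hy1 (h r hr)
lemma inner_bound (x m m0 : ℕ) (hm0 : 0 < m0) (hm : 0 < m) (hdvd : m0 ∣ m) (hmx : m ≤ x)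
    (s : Finset ℕ) (hs : ∀ p ∈ s, p.Prime ∧ p * m0 ∣ m) :
    ∑ p ∈ s, Real.log p ≤ Real.log ((x : ℝ) / m0) := by
  set t := m / m0 with ht
  have hmt : m = m0 * t := (Nat.div_mul_cancel hdvd).symm.trans (by ring)
  have ht0 : 0 < t := Nat.div_pos (Nat.le_of_dvd hm hdvd) hm0
  have hsub : s ⊆ t.primeFactors := by
    intro p hp
    obtain ⟨hp1, hp2⟩ := hs p hp
    have : p ∣ t := by
      have : m0 * p ∣ m0 * t := by rw [← hmt]; rwa [mul_comm] at hp2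
      exact (mul_dvd_mul_iff_left hm0.ne').mp this
    exact Nat.mem_primeFactors.mpr ⟨hp1, this, ht0.ne'⟩
  calc ∑ p ∈ s, Real.log p
      ≤ ∑ p ∈ t.primeFactors, Real.log p := by
        refine Finset.sum_le_sum_of_subset_of_nonneg hsub fun p hp _ => ?_
        exact Real.log_nonneg (by exact_mod_cast (Nat.prime_of_mem_primeFactors hp).one_lt.le)
    _ = Real.log ((∏ p ∈ t.primeFactors, p : ℕ) : ℝ) := by
        push_cast
        rw [Real.log_prod]
        intro p hp
        exact_mod_cast (Nat.prime_of_mem_primeFactors hp).pos.ne'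
    _ ≤ Real.log ((x : ℝ) / m0) := by
        have hpp : 0 < (∏ p ∈ t.primeFactors, p : ℕ) :=
          Finset.prod_pos fun p hp => (Nat.prime_of_mem_primeFactors hp).pos
        apply Real.log_le_log (by exact_mod_cast hpp)
        have h1 : (∏ p ∈ t.primeFactors, p : ℕ) ≤ t :=
          Nat.le_of_dvd ht0 (Nat.prod_primeFactors_dvd t)
        have h2 : (t : ℝ) ≤ (x : ℝ) / m0 := by
          rw [le_div_iff₀ (by exact_mod_cast hm0)]
          have h3 : t * m0 ≤ x := by rw [mul_comm, ← hmt]; exact hmx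
          exact_mod_cast h3
        calc ((∏ p ∈ t.primeFactors, p : ℕ) : ℝ) ≤ (t : ℝ) := by exact_mod_cast h1
          _ ≤ _ := h2

lemma TlePsi (𝒜 : Finset ℕ) (x : ℕ) (y : ℝ) (hmax : ∀ m ∈ 𝒜, m ≤ x)
    (hpos : ∀ m ∈ 𝒜, 0 < m) (m0 : ℕ) (hm0 : 0 < m0) :
    Tsum 𝒜 x y m0 ≤ (PsiAd 𝒜 y m0 : ℝ) * Real.log ((x : ℝ) / m0) := by
  set Ψset := 𝒜.filter (fun m => (Pplus m : ℝ) ≤ y ∧ m0 ∣ m) with hΨ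
  have key : ∀ p, p.Prime → (PsiAd 𝒜 y (p * m0) : ℝ) * Real.log p
      = ∑ m ∈ Ψset, (if p * m0 ∣ m then Real.log p else 0) := by
    intro p hp
    have : 𝒜.filter (fun m => (Pplus m : ℝ) ≤ y ∧ p * m0 ∣ m)
        = Ψset.filter (fun m => p * m0 ∣ m) := by
      rw [hΨ, Finset.filter_filter]
      apply Finset.filter_congr
      intro m _
      constructor
      · rintro ⟨h1, h2⟩; exact ⟨⟨h1, (dvd_of_mul_left_dvd h2 : m0 ∣ m)⟩, h2⟩
      · rintro ⟨⟨h1, _⟩, h2⟩; exact ⟨h1, h2⟩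
    rw [PsiAd, this, ← Finset.sum_filter, Finset.sum_const, nsmul_eq_mul]
  have step2 : Tsum 𝒜 x y m0 = ∑ m ∈ Ψset, ∑ p ∈ ((Finset.range (x + 1)).filter
      (fun p : ℕ => p.Prime ∧ (p : ℝ) ≤ y ∧ m0 * p ≤ x)).filter (fun p => p * m0 ∣ m),
      Real.log p := by
    rw [Tsum]
    rw [Finset.sum_congr rfl (fun p hp => key p (Finset.mem_filter.mp hp).2.1)]
    rw [Finset.sum_comm]
    exact Finset.sum_congr rfl fun m _ => (Finset.sum_filter _ _).symm
  rw [step2]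
  have : (PsiAd 𝒜 y m0 : ℝ) * Real.log ((x:ℝ)/m0) = ∑ _m ∈ Ψset, Real.log ((x:ℝ)/m0) := by
    rw [Finset.sum_const, nsmul_eq_mul]; rfl
  rw [this]
  refine Finset.sum_le_sum fun m hm => ?_
  simp only [hΨ, Finset.mem_filter] at hm
  refine inner_bound x m m0 hm0 (hpos m hm.1) hm.2.2 (hmax m hm.1) _ fun p hp => ?_
  simp only [Finset.mem_filter] at hp
  exact ⟨hp.1.2.1, hp.2⟩

lemma Tsum_nonneg (𝒜 : Finset ℕ) (x : ℕ) (y : ℝ) (n : ℕ) : 0 ≤ Tsum 𝒜 x y n := by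
  refine Finset.sum_nonneg fun p hp => ?_
  simp only [Finset.mem_filter] at hp
  exact mul_nonneg (Nat.cast_nonneg _) (Real.log_nonneg (by exact_mod_cast hp.2.1.one_lt.le))

lemma PsiEqAd (𝒜 : Finset ℕ) (x : ℕ) (y : ℝ) (hy : 1 < y) (hmax : ∀ m ∈ 𝒜, m ≤ x)
    (hpos : ∀ m ∈ 𝒜, 0 < m) (n : ℕ) (hn : 0 < n)
    (hfri : ∀ r : ℕ, r.Prime → r ∣ n → (r : ℝ) ≤ y)
    (p : ℕ) (hp : p.Prime) (hpy : (p : ℝ) ≤ y) (hlow : (x : ℝ) / y < ((n * p : ℕ) : ℝ)) :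
    PsiAd 𝒜 y (p * n) = Ad 𝒜 (p * n) := by
  rw [PsiAd, Ad]
  congr 1
  apply Finset.filter_congr
  intro m hm
  simp only [and_iff_right_iff_imp]
  intro hdvd
  have hm0 : 0 < m := hpos m hm
  have hnp : 0 < n * p := Nat.mul_pos hn hp.pos
  set t := m / (n * p) with htdef
  have hdvd' : n * p ∣ m := by rwa [mul_comm p n] at hdvd
  have hmt : m = n * p * t := (Nat.div_mul_cancel hdvd').symm.trans (by ring)
  have ht0 : 0 < t := Nat.div_pos (Nat.le_of_dvd hm0 hdvd') hnp
  have hty : (t : ℝ) < y := by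
    have h1 : (t : ℝ) * ((n * p : ℕ) : ℝ) ≤ x := by
      have : t * (n * p) ≤ x := by rw [mul_comm, ← hmt]; exact hmax m hm
      exact_mod_cast this
    have h2 : (x : ℝ) < ((n * p : ℕ) : ℝ) * y := (div_lt_iff₀ (by positivity)).mp hlow
    have h4 : (0:ℝ) < ((n * p : ℕ) : ℝ) := by exact_mod_cast hnp
    nlinarith [h1, h2, h4]
  apply Pplusle hy.le
  intro r hr
  have hrp := Nat.prime_of_mem_primeFactors hr
  have hrm : r ∣ m := Nat.dvd_of_mem_primeFactors hr
  rw [hmt] at hrm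
  rcases (Nat.Prime.dvd_mul hrp).mp hrm with h | h
  · rcases (Nat.Prime.dvd_mul hrp).mp h with h' | h'
    · exact hfri r hrp h'
    · rw [(Nat.prime_dvd_prime_iff_eq hrp hp).mp h']; exact hpy
  · have : r ≤ t := Nat.le_of_dvd ht0 h
    exact le_of_lt (lt_of_le_of_lt (by exact_mod_cast this : (r:ℝ) ≤ t) hty)

lemma key (𝒜 : Finset ℕ) (x : ℕ) (y : ℝ) (hy : 1 < y) (hx0 : 0 < x)
    (hmax : ∀ m ∈ 𝒜, m ≤ x) (hpos : ∀ m ∈ 𝒜, 0 < m)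
    (n : ℕ) (hn : 0 < n) (hfri : ∀ r : ℕ, r.Prime → r ∣ n → (r : ℝ) ≤ y) :
    Rsum 𝒜 x y n + ∑ p ∈ Pfin x y n,
        (Real.log p / Real.log ((x : ℝ) / ((n * p : ℕ) : ℝ))) * Tsum 𝒜 x y (n * p)
      ≤ Tsum 𝒜 x y n := by
  have hy0 : (0:ℝ) < y := lt_trans one_pos hy
  set Tfin := (Finset.range (x + 1)).filter
      (fun (p : ℕ) => p.Prime ∧ (p : ℝ) ≤ y ∧ n * p ≤ x) with hTfin
  have hsplit := (Finset.sum_filter_add_sum_filter_not Tfin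
      (fun p => ((n * p : ℕ) : ℝ) ≤ (x : ℝ) / y)
      (fun p => (PsiAd 𝒜 y (p * n) : ℝ) * Real.log p))
  have hP : Tfin.filter (fun p => ((n * p : ℕ) : ℝ) ≤ (x : ℝ) / y) = Pfin x y n := by
    rw [hTfin, Pfin, Finset.filter_filter]
    apply Finset.filter_congr
    intro p _
    constructor
    · rintro ⟨⟨h1, h2, _⟩, h4⟩; exact ⟨h1, h2, h4⟩
    · rintro ⟨h1, h2, h4⟩
      refine ⟨⟨h1, h2, ?_⟩, h4⟩
      have : ((n * p : ℕ) : ℝ) ≤ x := le_trans h4 (div_le_self (by positivity) hy.le)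
      exact_mod_cast this
  have hR : Tfin.filter (fun p => ¬ ((n * p : ℕ) : ℝ) ≤ (x : ℝ) / y)
      = (Finset.range (x + 1)).filter
        (fun (p : ℕ) => p.Prime ∧ (p : ℝ) ≤ y ∧ (x : ℝ) / y < ((n * p : ℕ) : ℝ) ∧ n * p ≤ x) := by
    rw [hTfin, Finset.filter_filter]
    apply Finset.filter_congr
    intro p _
    constructor
    · rintro ⟨⟨h1, h2, h3⟩, h4⟩; exact ⟨h1, h2, not_le.mp h4, h3⟩
    · rintro ⟨h1, h2, h3, h4⟩; exact ⟨⟨h1, h2, h4⟩, not_le.mpr h3⟩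
  have hRsum : ∑ p ∈ Tfin.filter (fun p => ¬ ((n * p : ℕ) : ℝ) ≤ (x : ℝ) / y),
      (PsiAd 𝒜 y (p * n) : ℝ) * Real.log p = Rsum 𝒜 x y n := by
    rw [hR, Rsum]
    refine Finset.sum_congr rfl fun p hp => ?_
    simp only [Finset.mem_filter] at hp
    rw [PsiEqAd 𝒜 x y hy hmax hpos n hn hfri p hp.2.1 hp.2.2.1 hp.2.2.2.1]
  have hPsum : ∑ p ∈ Pfin x y n,
      (Real.log p / Real.log ((x : ℝ) / ((n * p : ℕ) : ℝ))) * Tsum 𝒜 x y (n * p)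
      ≤ ∑ p ∈ Tfin.filter (fun p => ((n * p : ℕ) : ℝ) ≤ (x : ℝ) / y),
        (PsiAd 𝒜 y (p * n) : ℝ) * Real.log p := by
    rw [hP]
    refine Finset.sum_le_sum fun p hp => ?_
    simp only [Pfin, Finset.mem_filter] at hp
    obtain ⟨_, hprime, hpy, hple⟩ := hp
    have hnp : 0 < n * p := Nat.mul_pos hn hprime.pos
    have hnpx : ((n * p : ℕ) : ℝ) < x := lt_of_le_of_lt hple (div_lt_self (by exact_mod_cast hx0) hy)
    have hL : 0 < Real.log ((x : ℝ) / ((n * p : ℕ) : ℝ)) := by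
      apply Real.log_pos
      rw [lt_div_iff₀ (by exact_mod_cast hnp : (0:ℝ) < ((n*p:ℕ):ℝ))]
      simpa using hnpx
    have hT := TlePsi 𝒜 x y hmax hpos (n * p) hnp
    have hc : (0:ℝ) ≤ Real.log p := Real.log_nonneg (by exact_mod_cast hprime.one_lt.le)
    rw [mul_comm p n]
    rw [div_mul_eq_mul_div, div_le_iff₀ hL]
    have hT0 := Tsum_nonneg 𝒜 x y (n * p)
    nlinarith [hT, hc, hL, hT0]
  have hTs : Tsum 𝒜 x y n = ∑ p ∈ Tfin, (PsiAd 𝒜 y (p * n) : ℝ) * Real.log p := rfl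
  linarith [hsplit, hRsum, hPsum, hTs]

lemma castSucc_filter_prod {k : ℕ} (q : Fin k → ℕ) (p : ℕ) (j : Fin k) :
    ∏ l ∈ Finset.univ.filter (fun l : Fin (k+1) => l ≤ j.castSucc), ((Fin.snoc q p : Fin (k+1) → ℕ) l : ℝ)
    = ∏ l ∈ Finset.univ.filter (fun l : Fin k => l ≤ j), (q l : ℝ) := by
  have hmap : (Finset.univ.filter (fun l : Fin k => l ≤ j)).map Fin.castSuccEmb
      = Finset.univ.filter (fun l : Fin (k+1) => l ≤ j.castSucc) := by
    ext a
    simp only [Finset.mem_map, Finset.mem_filter, Finset.mem_univ, true_and]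
    constructor
    · rintro ⟨b, hb, rfl⟩
      exact hb
    · intro ha
      have hav : a.val < k := by
        have := ha
        rw [Fin.le_def] at this
        simp only [Fin.coe_castSucc] at this
        omega
      refine ⟨⟨a.val, hav⟩, ?_, ?_⟩
      · rw [Fin.le_def] at ha ⊢
        simpa using ha
      · simp [Fin.castSuccEmb, Fin.ext_iff]
  rw [← hmap, Finset.prod_map]
  refine Finset.prod_congr rfl fun l _ => ?_
  have h1 : (Fin.castSuccEmb l : Fin (k+1)) = l.castSucc := rfl
  rw [h1, Fin.snoc_castSucc]

lemma Qfac_snoc (x : ℝ) (k : ℕ) (q : Fin k → ℕ) (p : ℕ) :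
    Qfac x (k+1) (Fin.snoc q p) = Qfac x k q *
      (Real.log p / Real.log (x / ((∏ j, (q j : ℝ)) * p))) := by
  rw [Qfac, Qfac]
  have hnum : (∏ j : Fin (k+1), Real.log ((Fin.snoc q p : Fin (k+1) → ℕ) j))
      = (∏ j : Fin k, Real.log (q j)) * Real.log p := by
    rw [Fin.prod_univ_castSucc]
    simp
  have hden : (∏ j : Fin (k+1), Real.log (x / ∏ l ∈ Finset.univ.filter (fun l : Fin (k+1) => l ≤ j),
        ((Fin.snoc q p : Fin (k+1) → ℕ) l : ℝ)))
      = (∏ j : Fin k, Real.log (x / ∏ l ∈ Finset.univ.filter (fun l : Fin k => l ≤ j), (q l : ℝ)))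
        * Real.log (x / ((∏ j, (q j : ℝ)) * p)) := by
    rw [Fin.prod_univ_castSucc]
    congr 1
    · refine Finset.prod_congr rfl fun j _ => ?_
      rw [castSucc_filter_prod]
    · have hu : Finset.univ.filter (fun l : Fin (k+1) => l ≤ Fin.last k) = Finset.univ := by
        apply Finset.filter_true_of_mem
        intro l _
        exact Fin.le_last l
      rw [hu]
      congr 2
      have : (fun l => ((Fin.snoc q p : Fin (k+1) → ℕ) l : ℝ))
          = Fin.snoc (fun j => (q j : ℝ)) (p : ℝ) := by
        funext l
        exact congrFun (Fin.comp_snoc (fun m : ℕ => (m : ℝ)) q p) l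
      rw [this, Fin.prod_snoc]
  rw [hnum, hden, div_mul_div_comm]

lemma prod_snoc_nat {k : ℕ} (q : Fin k → ℕ) (p : ℕ) :
    (∏ j, (Fin.snoc q p : Fin (k+1) → ℕ) j) = (∏ j, q j) * p := Fin.prod_snoc p q

lemma mem_Sset (x : ℕ) (y : ℝ) (hy : 1 < y) (i : ℕ) (q : Fin i → ℕ)
    (h1 : ∀ j, (q j).Prime ∧ ((q j : ℝ) ≤ y))
    (h2 : ((∏ j, q j : ℕ) : ℝ) ≤ (x : ℝ) / y) : q ∈ Sset x y i := by
  rw [Sset, Finset.mem_filter]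
  refine ⟨?_, h1, h2⟩
  rw [Fintype.mem_piFinset]
  intro j
  rw [Finset.mem_range]
  have hj : q j ≤ ∏ l, q l :=
    Finset.single_le_prod' (fun l _ => (h1 l).1.one_lt.le) (Finset.mem_univ j)
  have hprod : (∏ l, q l : ℕ) ≤ x := by
    have : ((∏ l, q l : ℕ) : ℝ) ≤ x := h2.trans (div_le_self (Nat.cast_nonneg x) hy.le)
    exact_mod_cast this
  omega

lemma Qfac_nonneg (x : ℕ) (y : ℝ) (hy : 1 < y) (i : ℕ) (q : Fin i → ℕ)
    (hq : q ∈ Sset x y i) : 0 ≤ Qfac (x : ℝ) i q := by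
  rw [Sset, Finset.mem_filter] at hq
  obtain ⟨_, h1, h2⟩ := hq
  apply div_nonneg
  · exact Finset.prod_nonneg fun j _ => Real.log_nonneg (by exact_mod_cast (h1 j).1.one_lt.le)
  · apply le_of_lt
    apply Finset.prod_pos
    intro j _
    apply Real.log_pos
    set P := ∏ l ∈ Finset.univ.filter (fun l : Fin i => l ≤ j), q l with hPdef
    have hcast : (∏ l ∈ Finset.univ.filter (fun l : Fin i => l ≤ j), (q l : ℝ)) = (P : ℝ) := by
      rw [hPdef]; push_cast; rfl
    rw [hcast]
    have hP1 : 1 ≤ P := Finset.one_le_prod' fun l _ => (h1 l).1.one_lt.le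
    have hPle : P ≤ ∏ l, q l :=
      Finset.prod_le_prod_of_subset_of_one_le' (Finset.filter_subset _ _)
        (fun l _ _ => (h1 l).1.one_lt.le)
    have hprod1 : (1:ℝ) ≤ ((∏ l, q l : ℕ) : ℝ) := by
      exact_mod_cast le_trans hP1 hPle
    have hy0 : (0:ℝ) < y := lt_trans one_pos hy
    have hyx : y ≤ (x:ℝ) := (one_le_div hy0).mp (le_trans hprod1 h2)
    have hx0 : (0:ℝ) < x := lt_of_lt_of_le hy0 hyx
    have hlt : ((∏ l, q l : ℕ) : ℝ) < x := lt_of_le_of_lt h2 (div_lt_self hx0 hy)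
    rw [lt_div_iff₀ (by exact_mod_cast lt_of_lt_of_le one_pos hP1 : (0:ℝ) < (P:ℝ)), one_mul]
    calc (P:ℝ) ≤ ((∏ l, q l : ℕ) : ℝ) := by exact_mod_cast hPle
      _ < x := hlt

lemma reindex (x : ℕ) (y : ℝ) (hy : 1 < y) (k : ℕ) (f : ℕ → ℝ) :
    ∑ q ∈ Sset x y (k+1), Qfac (x : ℝ) (k+1) q * f (∏ j, q j)
    = ∑ q ∈ Sset x y k, ∑ p ∈ Pfin x y (∏ j, q j),
        (Qfac (x : ℝ) k q * (Real.log p / Real.log ((x : ℝ) / (((∏ j, q j) * p : ℕ) : ℝ))))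
          * f ((∏ j, q j) * p) := by
  rw [← Finset.sum_sigma (Sset x y k) (fun q => Pfin x y (∏ j, q j))
    (fun z => (Qfac (x : ℝ) k z.1 * (Real.log z.2 / Real.log ((x : ℝ) / (((∏ j, z.1 j) * z.2 : ℕ) : ℝ)))) * f ((∏ j, z.1 j) * z.2))]
  refine Finset.sum_nbij' (fun q => ⟨Fin.init q, q (Fin.last k)⟩)
    (fun z => Fin.snoc z.1 z.2) ?_ ?_ ?_ ?_ ?_
  · -- forward membership
    intro q hq
    rw [Sset, Finset.mem_filter] at hq
    obtain ⟨_, h1, h2⟩ := hq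
    have hsplit : (∏ j, q j) = (∏ j : Fin k, Fin.init q j) * q (Fin.last k) := by
      rw [Fin.prod_univ_castSucc]
      rfl
    have hprime : ∀ j : Fin k, (Fin.init q j).Prime ∧ ((Fin.init q j : ℝ) ≤ y) :=
      fun j => h1 j.castSucc
    have hicast : ((∏ j : Fin k, Fin.init q j : ℕ) : ℝ) ≤ (x:ℝ)/y := by
      refine le_trans ?_ h2
      have hle : (∏ j : Fin k, Fin.init q j) ≤ ∏ j, q j := by
        rw [hsplit]
        exact Nat.le_mul_of_pos_right _ (h1 (Fin.last k)).1.pos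
      exact_mod_cast hle
    rw [Finset.mem_sigma]
    constructor
    · exact mem_Sset x y hy k _ hprime hicast
    · rw [Pfin, Finset.mem_filter]
      have hcond : (((∏ j : Fin k, Fin.init q j) * q (Fin.last k) : ℕ) : ℝ) ≤ (x:ℝ)/y := by
        rw [← hsplit]; exact h2
      refine ⟨?_, (h1 (Fin.last k)).1, (h1 (Fin.last k)).2, hcond⟩
      rw [Finset.mem_range]
      have h3 : q (Fin.last k) ≤ ∏ j, q j :=
        Finset.single_le_prod' (fun l _ => (h1 l).1.one_lt.le) (Finset.mem_univ _)
      have h4 : ((∏ j, q j : ℕ) : ℝ) ≤ (x:ℝ) := le_trans h2 (div_le_self (Nat.cast_nonneg _) hy.le)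
      have h5 : (∏ j, q j : ℕ) ≤ x := by exact_mod_cast h4
      exact Nat.lt_succ_of_le (le_trans h3 h5)
  · -- backward membership
    rintro ⟨q, p⟩ hz
    rw [Finset.mem_sigma] at hz
    obtain ⟨hq, hp⟩ := hz
    rw [Sset, Finset.mem_filter] at hq
    obtain ⟨_, h1, h2⟩ := hq
    rw [Pfin, Finset.mem_filter] at hp
    obtain ⟨_, hpp, hpy, hple⟩ := hp
    refine mem_Sset x y hy (k+1) _ ?_ ?_
    · intro j
      by_cases hj : (j : ℕ) < k
      · have hje : j = (⟨(j : ℕ), hj⟩ : Fin k).castSucc := by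
          rw [Fin.ext_iff]; rfl
        rw [hje]
        simp only [Fin.snoc_castSucc]
        exact h1 _
      · have hje : j = Fin.last k := by
          rw [Fin.ext_iff]
          have := j.isLt
          simp only [Fin.val_last]
          omega
        rw [hje]
        simp only [Fin.snoc_last]
        exact ⟨hpp, hpy⟩
    · rw [prod_snoc_nat]
      exact hple
  · intro q _
    exact Fin.snoc_init_self q
  · rintro ⟨q, p⟩ _
    simp
  · -- values agree
    intro q hq
    conv_lhs => rw [← Fin.snoc_init_self q]
    rw [Qfac_snoc, prod_snoc_nat]
    have hc : ((∏ j : Fin k, (Fin.init q j : ℝ))) = (((∏ j : Fin k, Fin.init q j : ℕ)) : ℝ) := by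
      push_cast; rfl
    rw [hc, ← Nat.cast_mul]

lemma tsum_eq_Sset (𝒜 : Finset ℕ) (x : ℕ) (y : ℝ) (hy : 1 < y) (i : ℕ) :
    (∑' p : Fin i → ℕ,
      Set.indicator
        {q : Fin i → ℕ | (∀ j, (q j).Prime ∧ ((q j : ℝ) ≤ y)) ∧
          ((∏ j, q j : ℕ) : ℝ) ≤ (x : ℝ) / y}
        (fun q => Qfac (x : ℝ) i q * Rsum 𝒜 x y (∏ j, q j)) p)
    = ∑ q ∈ Sset x y i, Qfac (x : ℝ) i q * Rsum 𝒜 x y (∏ j, q j) := by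
  rw [tsum_eq_sum (s := Sset x y i) ?_]
  · refine Finset.sum_congr rfl fun q hq => ?_
    rw [Sset, Finset.mem_filter] at hq
    have hmem : q ∈ {q : Fin i → ℕ | (∀ j, (q j).Prime ∧ ((q j : ℝ) ≤ y)) ∧
        ((∏ j, q j : ℕ) : ℝ) ≤ (x : ℝ) / y} := ⟨hq.2.1, hq.2.2⟩
    exact Set.indicator_of_mem hmem _
  · intro b hb
    apply Set.indicator_of_notMem
    intro hbmem
    exact hb (mem_Sset x y hy i b hbmem.1 hbmem.2)

lemma Cmain (𝒜 : Finset ℕ) (x : ℕ) (y : ℝ) (hy : 1 < y) (hx0 : 0 < x)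
    (hmax : ∀ m ∈ 𝒜, m ≤ x) (hpos : ∀ m ∈ 𝒜, 0 < m) : ∀ k : ℕ,
    Rsum 𝒜 x y 1
      + (∑ i ∈ Finset.Icc 1 k, ∑ q ∈ Sset x y i, Qfac (x : ℝ) i q * Rsum 𝒜 x y (∏ j, q j))
      + (∑ q ∈ Sset x y (k+1), Qfac (x : ℝ) (k+1) q * Tsum 𝒜 x y (∏ j, q j))
    ≤ Tsum 𝒜 x y 1 := by
  have hfri1 : ∀ r : ℕ, r.Prime → r ∣ 1 → (r : ℝ) ≤ y :=
    fun r hr hd => (hr.ne_one (Nat.dvd_one.mp hd)).elim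
  have hkey := key 𝒜 x y hy hx0 hmax hpos 1 one_pos hfri1
  have hPos : ∀ n : ℕ, 0 < n → ∀ p ∈ Pfin x y n,
      0 ≤ (Real.log p / Real.log ((x : ℝ) / ((n * p : ℕ) : ℝ))) * Tsum 𝒜 x y (n * p) := by
    intro n hn p hp
    rw [Pfin, Finset.mem_filter] at hp
    obtain ⟨_, hpp, hpy, hple⟩ := hp
    have hnp : 0 < n * p := Nat.mul_pos hn hpp.pos
    have hL : 0 < Real.log ((x : ℝ) / ((n * p : ℕ) : ℝ)) := by
      apply Real.log_pos
      rw [lt_div_iff₀ (by exact_mod_cast hnp : (0:ℝ) < ((n*p:ℕ):ℝ)), one_mul]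
      exact lt_of_le_of_lt hple (div_lt_self (by exact_mod_cast hx0) hy)
    have hlp : (0:ℝ) ≤ Real.log p := Real.log_nonneg (by exact_mod_cast hpp.one_lt.le)
    exact mul_nonneg (div_nonneg hlp hL.le) (Tsum_nonneg 𝒜 x y (n * p))
  intro k
  induction k with
  | zero =>
    rw [show Finset.Icc 1 0 = (∅ : Finset ℕ) from Finset.Icc_eq_empty (by norm_num)]
    rw [Finset.sum_empty, add_zero]
    rw [reindex x y hy 0 (Tsum 𝒜 x y)]
    rcases Finset.eq_empty_or_nonempty (Sset x y 0) with he | ⟨q0, hq0⟩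
    · rw [he, Finset.sum_empty]
      have hS : 0 ≤ ∑ p ∈ Pfin x y 1,
          (Real.log p / Real.log ((x : ℝ) / ((1 * p : ℕ) : ℝ))) * Tsum 𝒜 x y (1 * p) :=
        Finset.sum_nonneg (hPos 1 one_pos)
      linarith [hkey, hS]
    · have hSz : Sset x y 0 = {q0} := by
        refine Finset.eq_singleton_iff_unique_mem.mpr ⟨hq0, fun b _ => ?_⟩
        funext j; exact j.elim0
      rw [hSz, Finset.sum_singleton]
      have hq01 : (∏ j : Fin 0, q0 j) = 1 := by
        rw [Finset.univ_eq_empty, Finset.prod_empty]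
      have hQ1 : Qfac (x : ℝ) 0 q0 = 1 := by
        rw [Qfac, Finset.univ_eq_empty, Finset.prod_empty, Finset.prod_empty, div_one]
      rw [hq01, hQ1]
      simpa only [one_mul] using hkey
  | succ k ih =>
    rw [Finset.sum_Icc_succ_top (Nat.le_add_left 1 k)]
    have hstep : (∑ q ∈ Sset x y (k+1), Qfac (x : ℝ) (k+1) q * Rsum 𝒜 x y (∏ j, q j))
        + (∑ q ∈ Sset x y (k+2), Qfac (x : ℝ) (k+2) q * Tsum 𝒜 x y (∏ j, q j))
        ≤ ∑ q ∈ Sset x y (k+1), Qfac (x : ℝ) (k+1) q * Tsum 𝒜 x y (∏ j, q j) := by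
      rw [reindex x y hy (k+1) (Tsum 𝒜 x y), ← Finset.sum_add_distrib]
      refine Finset.sum_le_sum fun q hq => ?_
      have hq' := hq
      rw [Sset, Finset.mem_filter] at hq'
      obtain ⟨_, h1, h2⟩ := hq'
      have hn : 0 < ∏ j, q j := Finset.prod_pos fun j _ => (h1 j).1.pos
      have hfri : ∀ r : ℕ, r.Prime → r ∣ ∏ j, q j → (r : ℝ) ≤ y := by
        intro r hr hd
        obtain ⟨j, _, hj⟩ := hr.prime.exists_mem_finset_dvd hd
        rw [(Nat.prime_dvd_prime_iff_eq hr (h1 j).1).mp hj]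
        exact (h1 j).2
      have hQ0 : 0 ≤ Qfac (x : ℝ) (k+1) q := Qfac_nonneg x y hy (k+1) q hq
      have hk2 := key 𝒜 x y hy hx0 hmax hpos (∏ j, q j) hn hfri
      have hrw : ∑ p ∈ Pfin x y (∏ j, q j),
          (Qfac (x : ℝ) (k+1) q *
            (Real.log p / Real.log ((x : ℝ) / (((∏ j, q j) * p : ℕ) : ℝ))))
            * Tsum 𝒜 x y ((∏ j, q j) * p)
          = Qfac (x : ℝ) (k+1) q * ∑ p ∈ Pfin x y (∏ j, q j),
            (Real.log p / Real.log ((x : ℝ) / (((∏ j, q j) * p : ℕ) : ℝ)))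
              * Tsum 𝒜 x y ((∏ j, q j) * p) := by
        rw [Finset.mul_sum]
        exact Finset.sum_congr rfl fun p _ => by ring
      rw [hrw, ← mul_add]
      exact mul_le_mul_of_nonneg_left hk2 hQ0
    have hkk : k + 1 + 1 = k + 2 := rfl
    rw [hkk]
    linarith [ih, hstep]

/-- The iterated lower bound for `T(y,1)` (Proposition 3.15). -/
theorem T_iterated_lower_bound (𝒜 : Finset ℕ) (h𝒜 : 𝒜.Nonempty) (hpos : ∀ n ∈ 𝒜, 0 < n)
    (y : ℝ) (hy : 1 < y) (x : ℕ) (hx : x = 𝒜.max' h𝒜) :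
    ∀ k : ℕ, 1 ≤ k →
      Rsum 𝒜 x y 1 +
        ∑ i ∈ Finset.Icc 1 k,
          ∑' p : Fin i → ℕ,
            Set.indicator
              {q : Fin i → ℕ | (∀ j, (q j).Prime ∧ ((q j : ℝ) ≤ y)) ∧
                ((∏ j, q j : ℕ) : ℝ) ≤ (x : ℝ) / y}
              (fun q => Qfac (x : ℝ) i q * Rsum 𝒜 x y (∏ j, q j)) p
      ≤ Tsum 𝒜 x y 1 := by
  intro k _
  have hx0 : 0 < x := by
    rw [hx]; exact hpos _ (𝒜.max'_mem h𝒜)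
  have hmax : ∀ m ∈ 𝒜, m ≤ x := fun m hm => hx ▸ Finset.le_max' 𝒜 m hm
  have heq : ∀ i ∈ Finset.Icc 1 k,
      (∑' p : Fin i → ℕ,
        Set.indicator
          {q : Fin i → ℕ | (∀ j, (q j).Prime ∧ ((q j : ℝ) ≤ y)) ∧
            ((∏ j, q j : ℕ) : ℝ) ≤ (x : ℝ) / y}
          (fun q => Qfac (x : ℝ) i q * Rsum 𝒜 x y (∏ j, q j)) p)
      = ∑ q ∈ Sset x y i, Qfac (x : ℝ) i q * Rsum 𝒜 x y (∏ j, q j) :=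
    fun i _ => tsum_eq_Sset 𝒜 x y hy i
  rw [Finset.sum_congr rfl heq]
  have hE : 0 ≤ ∑ q ∈ Sset x y (k+1), Qfac (x : ℝ) (k+1) q * Tsum 𝒜 x y (∏ j, q j) :=
    Finset.sum_nonneg fun q hq =>
      mul_nonneg (Qfac_nonneg x y hy (k+1) q hq) (Tsum_nonneg 𝒜 x y _)
  linarith [Cmain 𝒜 x y hy hx0 hmax hpos k, hE]
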